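/- Let n ≥ 2 and let H be a graph on n−1 vertices. Then ρ(H) ≥ ρ(K₁ + H) − (n−1)/ρ(K₁ + H). -/

import Mathlib

open SimpleGraph
open scoped Classical

/-- The largest real eigenvalue of the adjacency matrix of `G`
(the spectral radius of a graph). -/
noncomputable def specRad {V : Type} [Fintype V] (G : SimpleGraph V) : ℝ :=
  sSup {μ : ℝ | ∃ x : V → ℝ, x ≠ 0 ∧ (G.adjMatrix ℝ).mulVec x = μ • x}

/-- `G` contains a (not necessarily induced) copy of `F` as a subgraph. -/
def ContainsCopy {α β : Type} (F : SimpleGraph α) (G : SimpleGraph β) : Prop :=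
  ∃ f : α → β, Function.Injective f ∧ ∀ a b, F.Adj a b → G.Adj (f a) (f b)

/-- The Turán number `ex(n, F)`. -/
noncomputable def exNum {α : Type} (n : ℕ) (F : SimpleGraph α) : ℕ :=
  sSup {m : ℕ | ∃ G : SimpleGraph (Fin n), ¬ ContainsCopy F G ∧ G.edgeSet.ncard = m}

/-- The spectral Turán number `spex(n, F)`. -/
noncomputable def spex {α : Type} (n : ℕ) (F : SimpleGraph α) : ℝ :=
  sSup {r : ℝ | ∃ G : SimpleGraph (Fin n), ¬ ContainsCopy F G ∧ specRad G = r}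

/-- `t` vertex-disjoint copies of `F`. -/
def copies {α : Type} (t : ℕ) (F : SimpleGraph α) : SimpleGraph (Fin t × α) where
  Adj x y := x.1 = y.1 ∧ F.Adj x.2 y.2
  symm := ⟨fun _ _ h => ⟨h.1.symm, h.2.symm⟩⟩
  loopless := ⟨fun x h => F.irrefl h.2⟩

/-- The join `G + H` of two graphs. -/
def joinG {α β : Type} (G : SimpleGraph α) (H : SimpleGraph β) : SimpleGraph (α ⊕ β) where
  Adj x y := match x, y with
    | Sum.inl a, Sum.inl b => G.Adj a b
    | Sum.inr a, Sum.inr b => H.Adj a b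
    | Sum.inl _, Sum.inr _ => True
    | Sum.inr _, Sum.inl _ => True
  symm := by
    constructor
    rintro (a|a) (b|b) h
    · exact G.adj_symm h
    · trivial
    · trivial
    · exact H.adj_symm h
  loopless := by
    constructor
    rintro (a|a) h
    · exact G.irrefl h
    · exact H.irrefl h

/-- `S_{n,ℓ}^{+}`: the join of `K_ℓ` with an independent set of `n - ℓ` vertices,
plus one edge inside the independent set. -/
def sPlus (n ℓ : ℕ) : SimpleGraph (Fin n) :=
  SimpleGraph.fromRel (fun i j => (i : ℕ) < ℓ ∨ ((i : ℕ) ≤ ℓ + 1 ∧ (j : ℕ) ≤ ℓ + 1))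

/-- `S_{n,ℓ}^{++}`: the join of `K_ℓ` with an independent set of `n - ℓ` vertices,
plus a maximum matching inside the independent set. -/
def sPP (n ℓ : ℕ) : SimpleGraph (Fin n) :=
  SimpleGraph.fromRel (fun i j => (i : ℕ) < ℓ ∨ ((i : ℕ) - ℓ) / 2 = ((j : ℕ) - ℓ) / 2)

/-- The number of edges inside a vertex subset `A`. -/
noncomputable def eIn {n : ℕ} (G : SimpleGraph (Fin n)) (A : Finset (Fin n)) : ℕ :=
  (G.induce (A : Set (Fin n))).edgeSet.ncard

/-- The number of edges between two disjoint vertex subsets `A` and `B`. -/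
noncomputable def eCross {n : ℕ} (G : SimpleGraph (Fin n)) (A B : Finset (Fin n)) : ℕ :=
  Set.ncard {p : Fin n × Fin n | p.1 ∈ A ∧ p.2 ∈ B ∧ G.Adj p.1 p.2}

open Matrix

section Rayleigh
variable {V : Type} [Fintype V] [DecidableEq V] {A : Matrix V V ℝ} (hA : A.IsHermitian)

lemma inner_eq_dot (y : EuclideanSpace ℝ V) (x : V → ℝ) :
    (inner ℝ ((WithLp.equiv 2 (V → ℝ)).symm x) y : ℝ) = ⇑y ⬝ᵥ x := by
  simp only [PiLp.inner_apply, RCLike.inner_apply, starRingEnd_apply, star_trivial,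
    dotProduct, WithLp.equiv_symm_apply, PiLp.toLp_apply]

lemma dot_self_expansion (x : V → ℝ) :
    x ⬝ᵥ x = ∑ i, (⇑(hA.eigenvectorBasis i) ⬝ᵥ x) ^ 2 := by
  set b := hA.eigenvectorBasis
  set X : EuclideanSpace ℝ V := (WithLp.equiv 2 (V → ℝ)).symm x with hX
  have h := b.sum_inner_mul_inner X X
  have hXX : (inner ℝ X X : ℝ) = x ⬝ᵥ x := inner_eq_dot X x
  rw [hXX] at h
  rw [← h]
  refine Finset.sum_congr rfl fun i _ => ?_
  rw [real_inner_comm X (b i), inner_eq_dot (b i) x]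
  ring

lemma dot_mulVec_expansion (x : V → ℝ) :
    x ⬝ᵥ A *ᵥ x = ∑ i, hA.eigenvalues i * (⇑(hA.eigenvectorBasis i) ⬝ᵥ x) ^ 2 := by
  set b := hA.eigenvectorBasis
  set X : EuclideanSpace ℝ V := (WithLp.equiv 2 (V → ℝ)).symm x with hX
  set Y : EuclideanSpace ℝ V := (WithLp.equiv 2 (V → ℝ)).symm (A *ᵥ x) with hY
  have h := b.sum_inner_mul_inner X Y
  have hXY : (inner ℝ X Y : ℝ) = ⇑Y ⬝ᵥ x := inner_eq_dot Y x
  have hYx : ⇑Y ⬝ᵥ x = x ⬝ᵥ A *ᵥ x := by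
    rw [dotProduct_comm]; rfl
  rw [hXY, hYx] at h
  rw [← h]
  refine Finset.sum_congr rfl fun i _ => ?_
  have h1 : (inner ℝ (b i) Y : ℝ) = (inner ℝ Y (b i) : ℝ) := real_inner_comm _ _
  have h2 : (inner ℝ Y (b i) : ℝ) = ⇑(b i) ⬝ᵥ (A *ᵥ x) := inner_eq_dot (b i) (A *ᵥ x)
  have h3 : ⇑(b i) ⬝ᵥ (A *ᵥ x) = hA.eigenvalues i * (⇑(b i) ⬝ᵥ x) := by
    rw [dotProduct_mulVec, ← mulVec_transpose]
    have hT : Aᵀ = A := hA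
    rw [hT, hA.mulVec_eigenvectorBasis, smul_dotProduct]
    rfl
  rw [h1, h2, h3, inner_eq_dot (b i) x]
  ring

end Rayleigh

section Rayleigh2
variable {V : Type} [Fintype V] [DecidableEq V] [Nonempty V] {A : Matrix V V ℝ} (hA : A.IsHermitian)

noncomputable def lamMax : ℝ := Finset.univ.sup' Finset.univ_nonempty hA.eigenvalues

lemma rayleigh_le_lamMax (x : V → ℝ) : x ⬝ᵥ A *ᵥ x ≤ lamMax hA * (x ⬝ᵥ x) := by
  rw [dot_mulVec_expansion hA, dot_self_expansion hA, Finset.mul_sum]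
  refine Finset.sum_le_sum fun i _ => ?_
  exact mul_le_mul_of_nonneg_right
    (Finset.le_sup' hA.eigenvalues (Finset.mem_univ i)) (sq_nonneg _)

lemma dot_self_pos {x : V → ℝ} (hx : x ≠ 0) : 0 < x ⬝ᵥ x := by
  rcases lt_or_eq_of_le (Finset.sum_nonneg fun i _ => mul_self_nonneg (x i)) with h | h
  · exact h
  · exact absurd (dotProduct_self_eq_zero.mp h.symm) hx

lemma sSup_eigen_eq : sSup {μ : ℝ | ∃ x : V → ℝ, x ≠ 0 ∧ A.mulVec x = μ • x} = lamMax hA := by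
  have hub : ∀ μ ∈ {μ : ℝ | ∃ x : V → ℝ, x ≠ 0 ∧ A.mulVec x = μ • x}, μ ≤ lamMax hA := by
    rintro μ ⟨x, hx, heq⟩
    have hxx := dot_self_pos hx
    have h1 : x ⬝ᵥ A *ᵥ x = μ * (x ⬝ᵥ x) := by
      rw [show A *ᵥ x = μ • x from heq, dotProduct_smul, smul_eq_mul]
    have h2 := rayleigh_le_lamMax hA x
    rw [h1] at h2
    exact le_of_mul_le_mul_right h2 hxx
  have hmem : lamMax hA ∈ {μ : ℝ | ∃ x : V → ℝ, x ≠ 0 ∧ A.mulVec x = μ • x} := by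
    obtain ⟨i, -, hi⟩ := Finset.exists_mem_eq_sup' Finset.univ_nonempty hA.eigenvalues
    refine ⟨⇑(hA.eigenvectorBasis i), ?_, by
      rw [hA.mulVec_eigenvectorBasis]; unfold lamMax; rw [hi]⟩
    intro h
    exact hA.eigenvectorBasis.orthonormal.ne_zero i (by ext j; exact congrFun h j)
  exact le_antisymm (csSup_le ⟨_, hmem⟩ hub) (le_csSup ⟨_, hub⟩ hmem)

lemma sSup_eigen_mem (hA : A.IsHermitian) :
    sSup {μ : ℝ | ∃ x : V → ℝ, x ≠ 0 ∧ A.mulVec x = μ • x}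
      ∈ {μ : ℝ | ∃ x : V → ℝ, x ≠ 0 ∧ A.mulVec x = μ • x} := by
  rw [sSup_eigen_eq hA]
  obtain ⟨i, -, hi⟩ := Finset.exists_mem_eq_sup' Finset.univ_nonempty hA.eigenvalues
  refine ⟨⇑(hA.eigenvectorBasis i), ?_, by
    rw [hA.mulVec_eigenvectorBasis]; unfold lamMax; rw [hi]⟩
  intro h
  exact hA.eigenvectorBasis.orthonormal.ne_zero i (by ext j; exact congrFun h j)

lemma rayleigh_le_sSup (hA : A.IsHermitian) (x : V → ℝ) :
    x ⬝ᵥ A *ᵥ x ≤ sSup {μ : ℝ | ∃ x : V → ℝ, x ≠ 0 ∧ A.mulVec x = μ • x} * (x ⬝ᵥ x) := by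
  rw [sSup_eigen_eq hA]; exact rayleigh_le_lamMax hA x

end Rayleigh2


theorem spectral_radius_vertex_deletion (n : ℕ) (hn : 2 ≤ n) (H : SimpleGraph (Fin (n-1))) :
    specRad (joinG (⊤ : SimpleGraph (Fin 1)) H) -
      ((n : ℝ) - 1) / specRad (joinG (⊤ : SimpleGraph (Fin 1)) H) ≤ specRad H := by
  have hm1 : 1 ≤ n - 1 := by omega
  haveI : Nonempty (Fin (n-1)) := ⟨⟨0, hm1⟩⟩
  set G := joinG (⊤ : SimpleGraph (Fin 1)) H with hG
  -- adjacency facts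
  have hAdj_ll : ∀ a b : Fin 1, ¬ G.Adj (Sum.inl a) (Sum.inl b) := by
    intro a b h
    have h' : a ≠ b := h
    exact h' (Subsingleton.elim a b)
  have hAdj_lr : ∀ (a : Fin 1) (u : Fin (n-1)), G.Adj (Sum.inl a) (Sum.inr u) := fun a u => trivial
  have hAdj_rl : ∀ (u : Fin (n-1)) (a : Fin 1), G.Adj (Sum.inr u) (Sum.inl a) := fun u a => trivial
  have hAdj_rr : ∀ u w : Fin (n-1), G.Adj (Sum.inr u) (Sum.inr w) ↔ H.Adj u w := fun u w => Iff.rfl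
  have hGh : (G.adjMatrix ℝ).IsHermitian := by
    show (G.adjMatrix ℝ)ᴴ = G.adjMatrix ℝ
    ext i j
    simp [Matrix.conjTranspose_apply, SimpleGraph.adjMatrix_apply, SimpleGraph.adj_comm]
  have hHh : (H.adjMatrix ℝ).IsHermitian := by
    show (H.adjMatrix ℝ)ᴴ = H.adjMatrix ℝ
    ext i j
    simp [Matrix.conjTranspose_apply, SimpleGraph.adjMatrix_apply, SimpleGraph.adj_comm]
  set ρ := specRad G with hρdef
  set μ := specRad H with hμdef
  -- entry computation for the cross and inner entries
  have hent_rr : ∀ u w : Fin (n-1), G.adjMatrix ℝ (Sum.inr u) (Sum.inr w) = H.adjMatrix ℝ u w := by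
    intro u w
    by_cases h : H.Adj u w <;>
      simp [SimpleGraph.adjMatrix_apply, hAdj_rr, h]
  -- eigenvector of G
  obtain ⟨x, hx0, hxe⟩ :
      ∃ x : (Fin 1 ⊕ Fin (n-1)) → ℝ, x ≠ 0 ∧ (G.adjMatrix ℝ) *ᵥ x = ρ • x :=
    sSup_eigen_mem hGh
  set s := x (Sum.inl 0) with hs
  set y : Fin (n-1) → ℝ := fun u => x (Sum.inr u) with hy
  have eq1 : ∑ u, y u = ρ * s := by
    have h := congrFun hxe (Sum.inl 0)
    simp only [Matrix.mulVec, dotProduct, Pi.smul_apply, smul_eq_mul,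
      Fintype.sum_sum_type] at h
    have h1 : ∀ a : Fin 1, G.adjMatrix ℝ (Sum.inl 0) (Sum.inl a) * x (Sum.inl a) = 0 := by
      intro a; simp [SimpleGraph.adjMatrix_apply, hAdj_ll 0 a]
    have h2 : ∀ u : Fin (n-1), G.adjMatrix ℝ (Sum.inl 0) (Sum.inr u) * x (Sum.inr u) = y u := by
      intro u; simp [SimpleGraph.adjMatrix_apply, hAdj_lr 0 u, hy]
    rw [Finset.sum_congr rfl (fun a _ => h1 a), Finset.sum_congr rfl (fun u _ => h2 u)] at h
    simpa using h
  have eq2 : ∀ u : Fin (n-1), s + (H.adjMatrix ℝ *ᵥ y) u = ρ * y u := by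
    intro u
    have h := congrFun hxe (Sum.inr u)
    simp only [Matrix.mulVec, dotProduct, Pi.smul_apply, smul_eq_mul,
      Fintype.sum_sum_type] at h
    have h1 : ∀ a : Fin 1, G.adjMatrix ℝ (Sum.inr u) (Sum.inl a) * x (Sum.inl a) = s := by
      intro a
      have ha : a = 0 := Subsingleton.elim a 0
      subst ha
      simp [SimpleGraph.adjMatrix_apply, hAdj_rl u 0, hs]
    have h2 : ∀ w : Fin (n-1), G.adjMatrix ℝ (Sum.inr u) (Sum.inr w) * x (Sum.inr w)
        = H.adjMatrix ℝ u w * y w := by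
      intro w; rw [hent_rr u w]
    rw [Finset.sum_congr rfl (fun a _ => h1 a), Finset.sum_congr rfl (fun w _ => h2 w)] at h
    simpa [Matrix.mulVec, dotProduct] using h
  -- positivity of ρ via a single edge
  have hρ1 : 1 ≤ ρ := by
    set u0 : Fin (n-1) := ⟨0, hm1⟩
    set z : (Fin 1 ⊕ Fin (n-1)) → ℝ :=
      Pi.single (Sum.inl 0) 1 + Pi.single (Sum.inr u0) 1 with hz
    have hzz : z ⬝ᵥ z = 2 := by
      simp [hz, add_dotProduct, dotProduct_add, dotProduct_single,
        single_dotProduct, Pi.single_apply]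
      norm_num
    have hzAz : z ⬝ᵥ (G.adjMatrix ℝ *ᵥ z) = 2 := by
      simp [hz, Matrix.mulVec_add, add_dotProduct, dotProduct_add,
        Matrix.mulVec_single, dotProduct_single, single_dotProduct,
        SimpleGraph.adjMatrix_apply, hAdj_lr 0 u0, hAdj_rl u0 0, hAdj_ll 0 0]
      norm_num
    have h := rayleigh_le_sSup hGh z
    rw [hzAz, hzz] at h
    have : (2:ℝ) ≤ ρ * 2 := h
    linarith
  have hρ0 : 0 < ρ := by linarith
  -- y is nonzero
  have hy0 : y ≠ 0 := by
    intro h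
    have hyu : ∀ u, y u = 0 := fun u => congrFun h u
    have hmv : (H.adjMatrix ℝ *ᵥ y) = 0 := by
      rw [show y = 0 from h, Matrix.mulVec_zero]
    have hs0 : s = 0 := by
      have := eq2 ⟨0, hm1⟩
      rw [congrFun hmv ⟨0, hm1⟩, hyu ⟨0, hm1⟩] at this
      simpa using this
    apply hx0
    funext v
    rcases v with a | u
    · have : a = 0 := Subsingleton.elim a 0
      rw [this]; exact hs0
    · exact hyu u
  set q := y ⬝ᵥ y with hq
  have hq0 : 0 < q := dot_self_pos hy0
  -- Rayleigh identity for y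
  have hyy : y ⬝ᵥ (H.adjMatrix ℝ *ᵥ y) = ρ * q - ρ * s ^ 2 := by
    have e : ∀ u, (H.adjMatrix ℝ *ᵥ y) u = ρ * y u - s := fun u => by linarith [eq2 u]
    calc y ⬝ᵥ (H.adjMatrix ℝ *ᵥ y) = ∑ u, y u * (H.adjMatrix ℝ *ᵥ y) u := rfl
      _ = ∑ u, (ρ * (y u * y u) - s * y u) := by
          refine Finset.sum_congr rfl fun u _ => ?_
          rw [e u]; ring
      _ = ρ * (∑ u, y u * y u) - s * (∑ u, y u) := by
          rw [Finset.sum_sub_distrib, Finset.mul_sum, Finset.mul_sum]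
      _ = ρ * q - ρ * s ^ 2 := by rw [eq1, hq]; simp [dotProduct]; ring
  -- Cauchy-Schwarz
  have hCS : (ρ * s) ^ 2 ≤ ((n-1 : ℕ) : ℝ) * q := by
    rw [← eq1]
    have h := sq_sum_le_card_mul_sum_sq (s := (Finset.univ : Finset (Fin (n-1)))) (f := y)
    have h2 : ∑ u, y u ^ 2 = q := by
      rw [hq]; simp [dotProduct, sq]
    simpa [h2] using h
  -- Rayleigh bound for H
  have hRay : y ⬝ᵥ (H.adjMatrix ℝ *ᵥ y) ≤ μ * q := rayleigh_le_sSup hHh y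
  rw [hyy] at hRay
  -- conclude
  have hcast : (n : ℝ) - 1 = ((n-1 : ℕ) : ℝ) := by
    push_cast [Nat.cast_sub (by omega : 1 ≤ n)]; ring
  rw [hcast]
  have hρq : 0 < ρ * q := mul_pos hρ0 hq0
  have key : (ρ - ((n-1 : ℕ) : ℝ) / ρ) * (ρ * q) ≤ μ * (ρ * q) := by
    have h2 : (ρ - ((n-1 : ℕ) : ℝ)/ρ) * (ρ*q) = ρ*ρ*q - ((n-1 : ℕ) : ℝ)*q := by
      field_simp
    rw [h2]
    nlinarith [hRay, hCS, hq0, hρ0]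
  exact le_of_mul_le_mul_right key hρq
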